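/- Let x be irrational, let α be any countable linear order type, and let Ψ: ℕ → ℕ tend to infinity. Then there exists A ⊆ ℕ with |A ∩ [0,n)| ≤ Ψ(n) for all n such that x∗A = {x·a mod 1 : a ∈ A}, ordered as a subset of ℝ, has order type α. -/

import Mathlib

noncomputable def seqList (g : ℕ → List ℕ → ℕ) : ℕ → List ℕ
  | 0 => []
  | n+1 => seqList g n ++ [g n (seqList g n)]

lemma seqList_length (g : ℕ → List ℕ → ℕ) (n : ℕ) : (seqList g n).length = n := by
  induction n with
  | zero => rfl
  | succ n ih => simp [seqList, ih]

lemma seqList_getD (g : ℕ → List ℕ → ℕ) {m n : ℕ} (h : m < n) :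
    (seqList g n).getD m 0 = g m (seqList g m) := by
  induction n with
  | zero => omega
  | succ n ih =>
    rcases lt_or_eq_of_le (Nat.lt_succ_iff.mp h) with h' | h'
    · rw [seqList, List.getD_append _ _ _ _ (by rw [seqList_length]; exact h'), ih h']
    · subst h'
      rw [seqList, List.getD_append_right _ _ _ _ (by rw [seqList_length])]
      simp [seqList_length]


lemma fract_pos_of_irrational {y : ℝ} (hy : Irrational y) : 0 < Int.fract y := by
  rcases (Int.fract_nonneg y).lt_or_eq with h | h
  · exact h
  · exfalso
    have : y - ⌊y⌋ = 0 := h.symm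
    exact hy.ne_int ⌊y⌋ (by linarith [this] : y = (⌊y⌋:ℝ))

lemma lemB {y u v : ℝ} (hy : 0 < y) (hu : 0 < u) (huv : u < v) (hv : v ≤ 1)
    (hyv : y ≤ v - u) (N : ℕ) : ∃ j : ℕ, N ≤ j ∧ Int.fract (j * y) ∈ Set.Ico u v := by
  set p : ℕ := max 1 ⌈(N : ℝ) * y⌉₊ with hp
  set j : ℕ := ⌈((p : ℝ) + u) / y⌉₊ with hj
  have hp1 : (1 : ℝ) ≤ p := by exact_mod_cast le_max_left 1 _
  have hpu : (0:ℝ) < (p + u) / y := div_pos (by linarith) hy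
  have h1 : ((p : ℝ) + u) / y ≤ j := Nat.le_ceil _
  have h2 : (j : ℝ) < ((p : ℝ) + u) / y + 1 := Nat.ceil_lt_add_one hpu.le
  have hjy1 : (p : ℝ) + u ≤ j * y := by
    calc (p:ℝ) + u = ((p:ℝ)+u)/y * y := by field_simp
    _ ≤ j * y := by gcongr
  have hjy2 : (j : ℝ) * y < p + v := by
    have : (j:ℝ) * y < (((p : ℝ) + u) / y + 1) * y := by gcongr
    rw [add_mul, div_mul_cancel₀ _ hy.ne', one_mul] at this
    linarith
  have hfl : ⌊(j : ℝ) * y⌋ = (p : ℤ) := by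
    rw [Int.floor_eq_iff]
    push_cast
    constructor <;> linarith
  refine ⟨j, ?_, ?_⟩
  · have : (N : ℝ) * y ≤ p := le_trans (Nat.le_ceil _) (by exact_mod_cast le_max_right _ _)
    have : (N : ℝ) ≤ j := by
      calc (N:ℝ) = (N:ℝ)*y/y := by field_simp
      _ ≤ ((p:ℝ)+u)/y := by gcongr; linarith
      _ ≤ j := h1
    exact_mod_cast this
  · rw [Int.fract, hfl]
    constructor
    · push_cast; linarith
    · push_cast; linarith

lemma lemC {x : ℝ} (hx : Irrational x) {u v : ℝ} (hu : 0 < u) (huv : u < v) (hv : v < 1)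
    (N : ℕ) : ∃ a : ℕ, N ≤ a ∧ Int.fract (x * a) ∈ Set.Ioo u v := by
  obtain ⟨w₁, hw1, hw1'⟩ := exists_between huv
  obtain ⟨w₂, hw2, hw2'⟩ := exists_between hw1'
  set ε : ℝ := min (v - w₂) (w₁ - u) with hε
  have hε0 : 0 < ε := lt_min (by linarith) (by linarith)
  obtain ⟨n, hn⟩ := exists_nat_gt (1 / ε)
  have hn0 : 0 < n := by
    by_contra h
    push_neg at h
    interval_cases n
    simp at hn
    linarith [one_div_pos.mpr hε0, hn]
  obtain ⟨k, hk0, hkn, hk⟩ := Real.exists_nat_abs_mul_sub_round_le x hn0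
  set y : ℝ := k * x - round ((k:ℝ) * x) with hy
  have hyi : Irrational y := (hx.natCast_mul hk0.ne').sub_intCast _
  have hylt : |y| < ε := by
    have h1 : (0:ℝ) < n + 1 := by positivity
    have : 1 / ((n:ℝ) + 1) < ε := by
      rw [div_lt_iff₀ h1]
      rw [div_lt_iff₀ hε0] at hn
      nlinarith
    linarith [hk]
  have hyne : y ≠ 0 := hyi.ne_int 0 ∘ (by simp +contextual)
  -- helper for final fract identity
  have key : ∀ j : ℕ, Int.fract (x * (j * k : ℕ)) = Int.fract ((j:ℝ) * y) := by
    intro j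
    have : x * ((j * k : ℕ) : ℝ) = (j:ℝ) * y + (j * round ((k:ℝ)*x) : ℤ) := by
      push_cast
      ring
    rw [this, Int.fract_add_intCast]
  rcases hyne.lt_or_gt with hneg | hpos
  · -- y < 0
    set z : ℝ := -y with hz
    have hz0 : 0 < z := by linarith
    have hzlt : z < ε := by rw [abs_of_neg hneg] at hylt; linarith
    obtain ⟨j, hjN, hjm⟩ := lemB hz0 (u := 1 - w₂) (v := 1 - u) (by linarith) (by linarith)
      (by linarith) (by simp only [hε] at hzlt; have := min_le_right (v - w₂) (w₁ - u); linarith [min_le_right (v - w₂) (w₁ - u)]) N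
    refine ⟨j * k, le_trans hjN (Nat.le_mul_of_pos_right j hk0), ?_⟩
    rw [key j]
    have hnz : Int.fract ((j:ℝ) * z) ≠ 0 := by linarith [hjm.1]
    have : (j:ℝ) * y = -((j:ℝ) * z) := by rw [hz]; ring
    rw [this, Int.fract_neg hnz]
    exact ⟨by linarith [hjm.2], by linarith [hjm.1]⟩
  · -- y > 0
    have hylt' : y < ε := by rwa [abs_of_pos hpos] at hylt
    obtain ⟨j, hjN, hjm⟩ := lemB hpos (u := w₁) (v := v) (by linarith) (by linarith)
      (by linarith) (by linarith [min_le_left (v - w₂) (w₁ - u)]) N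
    refine ⟨j * k, le_trans hjN (Nat.le_mul_of_pos_right j hk0), ?_⟩
    rw [key j]
    exact ⟨by linarith [hjm.1], hjm.2⟩

def SpecP {L : Type} [LinearOrder L] (x : ℝ) (e : ℕ → L) (M : ℕ → ℕ)
    (n : ℕ) (l : List ℕ) (a : ℕ) : Prop :=
  1 ≤ a ∧ ((∀ m < n, e m ≠ e n) → M n ≤ a) ∧
  ∀ m < n, (e m < e n → Int.fract (x * (l.getD m 0 : ℕ)) < Int.fract (x * a)) ∧
           (e n < e m → Int.fract (x * a) < Int.fract (x * (l.getD m 0 : ℕ))) ∧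
           (e m = e n → a = l.getD m 0)

open Classical in
noncomputable def gfun {L : Type} [LinearOrder L] (x : ℝ) (e : ℕ → L) (M : ℕ → ℕ)
    (n : ℕ) (l : List ℕ) : ℕ :=
  if h : ∃ a, SpecP x e M n l a then h.choose else 0

noncomputable def Fseq {L : Type} [LinearOrder L] (x : ℝ) (e : ℕ → L) (M : ℕ → ℕ)
    (n : ℕ) : ℕ :=
  gfun x e M n (seqList (gfun x e M) n)


section Main
variable {L : Type} [LinearOrder L] {x : ℝ} (hx : Irrational x) (e : ℕ → L) (M : ℕ → ℕ)

lemma hex (hx : Irrational x) (n : ℕ) : ∃ a, SpecP x e M n (seqList (gfun x e M) n) a := by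
  induction n using Nat.strong_induction_on with
  | _ n IH =>
  set g := gfun x e M with hg
  have hFm : ∀ m, m < n → SpecP x e M m (seqList g m) (Fseq x e M m) := by
    intro m hm
    have h := IH m hm
    rw [Fseq, hg, gfun, dif_pos h]
    exact h.choose_spec
  have hgetD : ∀ m, m < n → ((seqList g n).getD m 0 : ℕ) = Fseq x e M m := by
    intro m hm
    rw [seqList_getD g hm]; rfl
  -- pairwise order facts among previous
  have hlt : ∀ m₁ m₂, m₁ < n → m₂ < n → e m₁ < e m₂ →
      Int.fract (x * (Fseq x e M m₁ : ℕ)) < Int.fract (x * (Fseq x e M m₂ : ℕ)) := by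
    intro m₁ m₂ h₁ h₂ hlt'
    rcases lt_trichotomy m₁ m₂ with h | h | h
    · have := ((hFm m₂ h₂).2.2 m₁ h).1 hlt'
      rwa [seqList_getD g h] at this
    · subst h; exact absurd hlt' (lt_irrefl _)
    · have := ((hFm m₁ h₁).2.2 m₂ h).2.1 hlt'
      rwa [seqList_getD g h] at this
  have heqF : ∀ m₁ m₂, m₁ < n → m₂ < n → e m₁ = e m₂ → Fseq x e M m₁ = Fseq x e M m₂ := by
    intro m₁ m₂ h₁ h₂ heq'
    rcases lt_trichotomy m₁ m₂ with h | h | h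
    · have := ((hFm m₂ h₂).2.2 m₁ h).2.2 heq'
      rw [seqList_getD g h] at this; exact this.symm
    · subst h; rfl
    · have := ((hFm m₁ h₁).2.2 m₂ h).2.2 heq'.symm
      rwa [seqList_getD g h] at this
  by_cases hrep : ∃ m, m < n ∧ e m = e n
  · obtain ⟨m₀, hm₀, hem₀⟩ := hrep
    refine ⟨Fseq x e M m₀, (hFm m₀ hm₀).1, fun h => absurd hem₀ (h m₀ hm₀), ?_⟩
    intro m hm
    rw [hgetD m hm]
    refine ⟨fun h => hlt m m₀ hm hm₀ (hem₀ ▸ h), fun h => hlt m₀ m hm₀ hm (hem₀ ▸ h),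
      fun h => heqF m₀ m hm₀ hm (hem₀.trans h.symm)⟩
  · push_neg at hrep
    -- new element
    set Flow : Finset ℕ := (Finset.range n).filter (fun m => e m < e n) with hFlow
    set Fhigh : Finset ℕ := (Finset.range n).filter (fun m => e n < e m) with hFhigh
    set u : ℝ := (insert (0:ℝ) (Flow.image fun m => Int.fract (x * (Fseq x e M m : ℕ)))).max'
      (Finset.insert_nonempty _ _) with hu
    set v : ℝ := (insert (1:ℝ) (Fhigh.image fun m => Int.fract (x * (Fseq x e M m : ℕ)))).min'
      (Finset.insert_nonempty _ _) with hv
    have hu0 : 0 ≤ u := by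
      rw [hu]; exact Finset.le_max' _ _ (Finset.mem_insert_self _ _)
    have hv1 : v ≤ 1 := by
      rw [hv]; exact Finset.min'_le _ _ (Finset.mem_insert_self _ _)
    have hulow : ∀ m ∈ Flow, Int.fract (x * (Fseq x e M m : ℕ)) ≤ u := by
      intro m hm
      rw [hu]
      apply Finset.le_max'
      exact Finset.mem_insert_of_mem (Finset.mem_image_of_mem _ hm)
    have hvhigh : ∀ m ∈ Fhigh, v ≤ Int.fract (x * (Fseq x e M m : ℕ)) := by
      intro m hm
      rw [hv]
      apply Finset.min'_le
      exact Finset.mem_insert_of_mem (Finset.mem_image_of_mem _ hm)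
    have hfr_pos : ∀ m, m < n → 0 < Int.fract (x * (Fseq x e M m : ℕ)) := by
      intro m hm
      exact fract_pos_of_irrational (hx.mul_natCast (by have := (hFm m hm).1; omega))
    have hfr_lt1 : ∀ m, (Int.fract (x * (Fseq x e M m : ℕ))) < 1 := fun m => Int.fract_lt_one _
    have hu_mem := Finset.max'_mem _ (Finset.insert_nonempty (0:ℝ)
      (Flow.image fun m => Int.fract (x * (Fseq x e M m : ℕ))))
    have hv_mem := Finset.min'_mem _ (Finset.insert_nonempty (1:ℝ)
      (Fhigh.image fun m => Int.fract (x * (Fseq x e M m : ℕ))))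
    rw [Finset.mem_insert] at hu_mem hv_mem
    have huv : u < v := by
      rcases hu_mem with h1 | h1 <;> rcases hv_mem with h2 | h2
      · rw [← hu] at h1; rw [← hv] at h2; rw [h1, h2]; norm_num
      · rw [← hv] at h2
        rw [Finset.mem_image] at h2
        obtain ⟨m, hm, hm'⟩ := h2
        rw [← hu] at h1; rw [h1, ← hm']
        exact hfr_pos m (Finset.mem_range.mp (Finset.mem_filter.mp hm).1)
      · rw [← hu] at h1
        rw [Finset.mem_image] at h1
        obtain ⟨m, hm, hm'⟩ := h1
        rw [← hv] at h2; rw [h2, ← hm']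
        exact hfr_lt1 m
      · rw [← hu] at h1; rw [← hv] at h2
        rw [Finset.mem_image] at h1 h2
        obtain ⟨m₁, hm₁, hm₁'⟩ := h1
        obtain ⟨m₂, hm₂, hm₂'⟩ := h2
        rw [← hm₁', ← hm₂']
        exact hlt m₁ m₂ (Finset.mem_range.mp (Finset.mem_filter.mp hm₁).1)
          (Finset.mem_range.mp (Finset.mem_filter.mp hm₂).1)
          (lt_trans (Finset.mem_filter.mp hm₁).2 (Finset.mem_filter.mp hm₂).2)
    obtain ⟨u', hu'1, hu'2⟩ := exists_between huv
    obtain ⟨v', hv'1, hv'2⟩ := exists_between hu'2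
    obtain ⟨a, haN, hfa⟩ := lemC hx (u := u') (v := v')
      (lt_of_le_of_lt hu0 hu'1) hv'1 (lt_of_lt_of_le hv'2 hv1) (max (M n) 1)
    refine ⟨a, le_trans (le_max_right _ _) haN, fun _ => le_trans (le_max_left _ _) haN, ?_⟩
    intro m hm
    rw [hgetD m hm]
    refine ⟨fun h => ?_, fun h => ?_, fun h => absurd h (hrep m hm)⟩
    · have : m ∈ Flow := Finset.mem_filter.mpr ⟨Finset.mem_range.mpr hm, h⟩
      calc Int.fract (x * (Fseq x e M m : ℕ)) ≤ u := hulow m this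
        _ < u' := hu'1
        _ < Int.fract (x * a) := hfa.1
    · have : m ∈ Fhigh := Finset.mem_filter.mpr ⟨Finset.mem_range.mpr hm, h⟩
      calc Int.fract (x * a) < v' := hfa.2
        _ < v := hv'2
        _ ≤ Int.fract (x * (Fseq x e M m : ℕ)) := hvhigh m this

end Main

/-- For irrational `x`, any countable linear order type `α`, and any `Ψ : ℕ → ℕ`
tending to infinity, there is `A ⊆ ℕ` with `|A ∩ [0,n)| ≤ Ψ(n)` for all `n`
such that `x∗A` has order type `α`. -/
theorem stmt_12 (x : ℝ) (hx : Irrational x) (L : Type) [LinearOrder L] [Countable L]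
    (Ψ : ℕ → ℕ) (hΨ : Filter.Tendsto Ψ Filter.atTop Filter.atTop) :
    ∃ A : Set ℕ, (∀ n : ℕ, (A ∩ Set.Iio n).ncard ≤ Ψ n) ∧
      Nonempty ((↥((fun a : ℕ => Int.fract (x * a)) '' A)) ≃o L) := by
  rcases isEmpty_or_nonempty L with hL | hL
  · refine ⟨∅, by simp, ?_⟩
    rw [Set.image_empty]
    exact ⟨⟨Equiv.equivOfIsEmpty _ _, fun {a} => isEmptyElim a⟩⟩
  · obtain ⟨e, he⟩ := exists_surjective_nat L
    choose M hM using fun k => Filter.eventually_atTop.mp (hΨ.eventually_ge_atTop (k+1))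
    set F := Fseq x e M with hF
    have hFall : ∀ n, SpecP x e M n (seqList (gfun x e M) n) (F n) := by
      intro n
      have h := hex e M hx n
      rw [hF]
      simp only [Fseq, gfun, dif_pos h]
      exact h.choose_spec
    have hgetD' : ∀ {m n : ℕ}, m < n → ((seqList (gfun x e M) n).getD m 0 : ℕ) = F m :=
      fun h => (seqList_getD _ h)
    have hlt : ∀ m₁ m₂, e m₁ < e m₂ → Int.fract (x * (F m₁ : ℕ)) < Int.fract (x * (F m₂ : ℕ)) := by
      intro m₁ m₂ h
      rcases lt_trichotomy m₁ m₂ with h' | h' | h'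
      · have := ((hFall m₂).2.2 m₁ h').1 h
        rwa [hgetD' h'] at this
      · subst h'; exact absurd h (lt_irrefl _)
      · have := ((hFall m₁).2.2 m₂ h').2.1 h
        rwa [hgetD' h'] at this
    have heqF : ∀ m₁ m₂, e m₁ = e m₂ → F m₁ = F m₂ := by
      intro m₁ m₂ h
      rcases lt_trichotomy m₁ m₂ with h' | h' | h'
      · have := ((hFall m₂).2.2 m₁ h').2.2 h
        rw [hgetD' h'] at this; exact this.symm
      · subst h'; rfl
      · have := ((hFall m₁).2.2 m₂ h').2.2 h.symm
        rwa [hgetD' h'] at this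
    refine ⟨Set.range F, ?_, ?_⟩
    · intro m
      have hsub : Set.range F ∩ Set.Iio m ⊆ F '' Set.Iio (Ψ m) := by
        rintro a ⟨⟨n₁, rfl⟩, ham⟩
        have hEx : ∃ n, F n = F n₁ := ⟨n₁, rfl⟩
        have hFn₀ : F (Nat.find hEx) = F n₁ := Nat.find_spec hEx
        set n₀ := Nat.find hEx with hn₀
        have hfirst : ∀ j, j < n₀ → e j ≠ e n₀ := by
          intro j hj hje
          have h3 := ((hFall n₀).2.2 j hj).2.2 hje
          rw [hgetD' hj] at h3
          exact Nat.find_min hEx hj (h3 ▸ hFn₀)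
        have hMa : M n₀ ≤ F n₀ := (hFall n₀).2.1 hfirst
        have ham' : F n₀ < m := by rw [hFn₀]; exact ham
        have hΨm : n₀ + 1 ≤ Ψ m := hM n₀ m (by omega)
        exact ⟨n₀, by simpa using by omega, hFn₀⟩
      calc (Set.range F ∩ Set.Iio m).ncard
          ≤ (F '' Set.Iio (Ψ m)).ncard := Set.ncard_le_ncard hsub ((Set.finite_Iio _).image _)
        _ ≤ (Set.Iio (Ψ m)).ncard := Set.ncard_image_le (Set.finite_Iio _)
        _ = Ψ m := by
            rw [show Set.Iio (Ψ m) = ↑(Finset.range (Ψ m)) from by ext; simp,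
              Set.ncard_coe_finset, Finset.card_range]
    · set S := (fun a : ℕ => Int.fract (x * a)) '' Set.range F with hS
      have hmemS : ∀ n, Int.fract (x * (F n : ℕ)) ∈ S := fun n => ⟨F n, ⟨n, rfl⟩, rfl⟩
      set ψ : L → ↥S := fun l => ⟨Int.fract (x * (F (he l).choose : ℕ)), hmemS _⟩ with hψ
      have hψmono : StrictMono ψ := by
        intro l₁ l₂ h
        have h1 : e (he l₁).choose = l₁ := (he l₁).choose_spec
        have h2 : e (he l₂).choose = l₂ := (he l₂).choose_spec
        exact Subtype.mk_lt_mk.mpr (hlt _ _ (by rw [h1, h2]; exact h))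
      have hψsurj : Function.Surjective ψ := by
        rintro ⟨s, a, ⟨n, rfl⟩, rfl⟩
        refine ⟨e n, ?_⟩
        apply Subtype.ext
        show Int.fract (x * (F (he (e n)).choose : ℕ)) = Int.fract (x * (F n : ℕ))
        rw [heqF _ _ ((he (e n)).choose_spec)]
      exact ⟨(StrictMono.orderIsoOfSurjective ψ hψmono hψsurj).symm⟩
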